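/- For integers n ≥ 4 and d ≥ 2, let f_n'(d) = (1-d)^{n-1}(d((n+2)d - (n²+n+2))) + 2d be the derivative of f_n(d) = (1-d)^n(1+nd-d²)-(1-d²). Then for real d in the interval [2, n-2]: if n is even then f_n'(d) > 0, and if n is odd then f_n'(d) < 0. -/

import Mathlib

/-- `f_n'(d) = (1-d)^{n-1} d((n+2)d - (n²+n+2)) + 2d` is the derivative of
`f_n(d) = (1-d)^n(1+nd-d²)-(1-d²)`, and on `[2, n-2]` it is positive for even `n`
and negative for odd `n`. -/
theorem stmt14 (n : ℕ) (hn : 4 ≤ n) (d : ℝ) (hd : d ∈ Set.Icc (2 : ℝ) ((n : ℝ) - 2)) :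
    HasDerivAt (fun x : ℝ => (1 - x) ^ n * (1 + (n : ℝ) * x - x ^ 2) - (1 - x ^ 2))
      ((1 - d) ^ (n - 1) * (d * (((n : ℝ) + 2) * d - ((n : ℝ) ^ 2 + (n : ℝ) + 2))) + 2 * d) d ∧
    (Even n →
      0 < (1 - d) ^ (n - 1) * (d * (((n : ℝ) + 2) * d - ((n : ℝ) ^ 2 + (n : ℝ) + 2))) + 2 * d) ∧
    (Odd n →
      (1 - d) ^ (n - 1) * (d * (((n : ℝ) + 2) * d - ((n : ℝ) ^ 2 + (n : ℝ) + 2))) + 2 * d < 0) := by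
  obtain ⟨hd2, hdn⟩ := hd
  have hn4 : (4 : ℝ) ≤ (n : ℝ) := by exact_mod_cast hn
  obtain ⟨m, rfl⟩ : ∃ m, n = m + 1 := ⟨n - 1, (Nat.succ_pred_eq_of_pos (by omega)).symm⟩
  have hmn : (m + 1 : ℕ) - 1 = m := rfl
  push_cast at hn4 hdn hd2
  constructor
  · have h1 : HasDerivAt (fun x : ℝ => 1 - x) (-1) d := by
      simpa using (hasDerivAt_id d).const_sub 1
    have h2 := h1.pow (m + 1)
    have h3 : HasDerivAt (fun x : ℝ => 1 + ((m + 1 : ℕ) : ℝ) * x - x ^ 2)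
        (((m : ℝ) + 1) - 2 * d) d := by
      have := (((hasDerivAt_id d).const_mul (((m + 1 : ℕ) : ℝ))).const_add 1).sub
        ((hasDerivAt_pow 2 d))
      push_cast at this
      push_cast
      simp at this
      exact this
    have h4 : HasDerivAt (fun x : ℝ => 1 - x ^ 2) (-(2 * d)) d := by
      simpa using (hasDerivAt_pow 2 d).const_sub 1
    have h5 := (h2.mul h3).sub h4
    have heq : (1 - d) ^ ((m + 1 : ℕ) - 1) *
        (d * ((((m + 1 : ℕ) : ℝ) + 2) * d - (((m + 1 : ℕ) : ℝ) ^ 2 + ((m + 1 : ℕ) : ℝ) + 2)))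
        + 2 * d
        = ((m + 1 : ℕ) : ℝ) * (1 - d) ^ ((m + 1 : ℕ) - 1) * -1 * (1 + ((m : ℝ) + 1) * d - d ^ 2)
          + (1 - d) ^ (m + 1) * (((m : ℝ) + 1) - 2 * d) - -(2 * d) := by
      simp only [hmn]
      push_cast
      rw [pow_succ]
      ring
    rw [heq]
    exact_mod_cast h5
  · have hneg : (1 : ℝ) - d < 0 := by linarith
    have hfac : ((m : ℝ) + 1 + 2) * d - (((m : ℝ) + 1) ^ 2 + ((m : ℝ) + 1) + 2)
        ≤ -(((m : ℝ) + 1) + 6) := by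
      nlinarith [mul_nonneg (show (0:ℝ) ≤ (m:ℝ) + 3 by positivity)
        (show (0:ℝ) ≤ (m:ℝ) - 1 - d by linarith)]
    have hd0 : 0 < d := by linarith
    constructor
    · intro he
      have hmodd : Odd (m + 1 - 1 + 1 - 1) := by
        rcases he with ⟨k, hk⟩; exact ⟨k - 1, by omega⟩
      have hpow : (1 - d) ^ ((m + 1) - 1) < 0 := by
        have : Odd m := by simpa using hmodd
        exact this.pow_neg hneg
      have : (1 - d) ^ ((m + 1) - 1) *
          (d * (((m : ℝ) + 1 + 2) * d - (((m : ℝ) + 1) ^ 2 + ((m : ℝ) + 1) + 2))) > 0 := by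
        apply mul_pos_of_neg_of_neg hpow
        apply mul_neg_of_pos_of_neg hd0
        nlinarith
      push_cast
      push_cast at this
      nlinarith
    · intro ho
      have hmeven : Even m := by
        rcases ho with ⟨k, hk⟩; exact ⟨k, by omega⟩
      -- (1-d)^m = (d-1)^m ≥ 1
      have hpow : (1 : ℝ) ≤ (1 - d) ^ m := by
        rw [← Even.neg_pow hmeven, neg_sub]
        exact one_le_pow₀ (by linarith)
      have hterm : ((m : ℝ) + 1 + 6) * d ≤
          (1 - d) ^ m * (d * ((((m : ℝ) + 1) ^ 2 + ((m : ℝ) + 1) + 2) - ((m : ℝ) + 1 + 2) * d)) := by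
        have h1 : ((m : ℝ) + 1 + 6) * d ≤
            d * ((((m : ℝ) + 1) ^ 2 + ((m : ℝ) + 1) + 2) - ((m : ℝ) + 1 + 2) * d) := by
          nlinarith
        have h2 : 0 < d * ((((m : ℝ) + 1) ^ 2 + ((m : ℝ) + 1) + 2) - ((m : ℝ) + 1 + 2) * d) := by
          nlinarith
        nlinarith
      simp only [hmn]
      push_cast
      push_cast at hterm
      nlinarith
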